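/- If M is a perfect Lie K-algebra (M = [M,M]), then there is an isomorphism of Lie K-algebras M ⊗ (M ⊗ M) ≅ M ⊗ M, given by m ⊗ m' ↦ m ⊗ (m'₁ ⊗ m'₂) for any choice m' = [m'₁, m'₂], with inverse m ⊗ (m' ⊗ m'') ↦ m ⊗ [m', m'']. -/

import Mathlib

universe u

/-- The Lie bracket as a bilinear map. -/
def bracketMap (K : Type u) [CommRing K] (M : Type u) [LieRing M] [LieAlgebra K M] :
    M →ₗ[K] M →ₗ[K] M :=
  LinearMap.mk₂ K (fun a b => ⁅a, b⁆) add_lie smul_lie lie_add lie_smul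

/-- Axioms for a crossed module of Lie `K`-algebras `(d : M → N, act)`. -/
structure LieXMod (K : Type u) [CommRing K] (M N : Type u)
    [LieRing M] [LieAlgebra K M] [LieRing N] [LieAlgebra K N]
    (d : M →ₗ⁅K⁆ N) (act : N →ₗ[K] M →ₗ[K] M) : Prop where
  act_lie : ∀ n n' m, act ⁅n, n'⁆ m = act n (act n' m) - act n' (act n m)
  lie_act : ∀ n m m', act n ⁅m, m'⁆ = ⁅act n m, m'⁆ + ⁅m, act n m'⁆
  equivar : ∀ n m, d (act n m) = ⁅n, d m⁆
  peiffer : ∀ m m', act (d m) m' = ⁅m, m'⁆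

/-- Axioms `BLie1`–`BLie6` for a braiding on a crossed module of Lie algebras. -/
structure LieBraiding (K : Type u) [CommRing K] (M N : Type u)
    [LieRing M] [LieAlgebra K M] [LieRing N] [LieAlgebra K N]
    (d : M →ₗ⁅K⁆ N) (act : N →ₗ[K] M →ₗ[K] M)
    (br : N →ₗ[K] N →ₗ[K] M) : Prop where
  b1 : ∀ n n', d (br n n') = ⁅n, n'⁆
  b2 : ∀ m m', br (d m) (d m') = ⁅m, m'⁆
  b3 : ∀ m n, br (d m) n = - act n m
  b4 : ∀ n m, br n (d m) = act n m
  b5 : ∀ n n' n'', br n ⁅n', n''⁆ = br ⁅n, n'⁆ n'' - br ⁅n, n''⁆ n'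
  b6 : ∀ n n' n'', br ⁅n, n'⁆ n'' = br n ⁅n', n''⁆ - br n' ⁅n, n''⁆

/-- `T`, together with the bilinear pairing `t`, is the non-abelian tensor product
of the Lie algebras `A` and `B` acting on each other via `actAB` and `actBA`:
it satisfies the defining relations of the presentation and the universal property. -/
structure IsNATensor (K : Type u) [CommRing K] (A B : Type u)
    [LieRing A] [LieAlgebra K A] [LieRing B] [LieAlgebra K B]
    (actAB : A →ₗ[K] B →ₗ[K] B) (actBA : B →ₗ[K] A →ₗ[K] A)
    (T : Type u) [LieRing T] [LieAlgebra K T]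
    (t : A →ₗ[K] B →ₗ[K] T) : Prop where
  rel3a : ∀ a a' b, t ⁅a, a'⁆ b = t a (actAB a' b) - t a' (actAB a b)
  rel3b : ∀ a b b', t a ⁅b, b'⁆ = t (actBA b' a) b - t (actBA b a) b'
  rel4 : ∀ a b a' b', ⁅t a b, t a' b'⁆ = - t (actBA b a) (actAB a' b')
  lift : ∀ (C : Type u) [LieRing C] [LieAlgebra K C] (f : A →ₗ[K] B →ₗ[K] C),
      (∀ a a' b, f ⁅a, a'⁆ b = f a (actAB a' b) - f a' (actAB a b)) →
      (∀ a b b', f a ⁅b, b'⁆ = f (actBA b' a) b - f (actBA b a) b') →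
      (∀ a b a' b', ⁅f a b, f a' b'⁆ = - f (actBA b a) (actAB a' b')) →
      ∃! φ : T →ₗ⁅K⁆ C, ∀ a b, φ (t a b) = f a b

/-- `T` with pairing `t` is the non-abelian tensor square of `N` (adjoint actions). -/
def IsNATensorSq (K : Type u) [CommRing K] (N : Type u) [LieRing N] [LieAlgebra K N]
    (T : Type u) [LieRing T] [LieAlgebra K T] (t : N →ₗ[K] N →ₗ[K] T) : Prop :=
  IsNATensor K N N (bracketMap K N) (bracketMap K N) T t



section AuxLemmas

lemma span_lie_mem' {K : Type u} [CommRing K] {T : Type u} [LieRing T] [LieAlgebra K T]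
    {s : Set T} (h : ∀ x ∈ s, ∀ y ∈ s, ⁅x, y⁆ ∈ Submodule.span K s) :
    ∀ x ∈ Submodule.span K s, ∀ y ∈ Submodule.span K s, ⁅x, y⁆ ∈ Submodule.span K s := by
  intro x hx
  induction hx using Submodule.span_induction with
  | mem x hxs =>
    intro y hy
    induction hy using Submodule.span_induction with
    | mem y hys => exact h x hxs y hys
    | zero => simp only [lie_zero]; exact Submodule.zero_mem _
    | add y z _ _ iy iz => rw [lie_add]; exact Submodule.add_mem _ iy iz
    | smul c y _ iy => rw [lie_smul]; exact Submodule.smul_mem _ _ iy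
  | zero => intro y hy; simp only [zero_lie]; exact Submodule.zero_mem _
  | add x z hx hz ix iz => intro y hy; rw [add_lie]; exact Submodule.add_mem _ (ix y hy) (iz y hy)
  | smul c x hx ix => intro y hy; rw [smul_lie]; exact Submodule.smul_mem _ _ (ix y hy)

@[simp] lemma bracketMap_apply {K : Type u} [CommRing K] {M : Type u} [LieRing M] [LieAlgebra K M]
    (a b : M) : bracketMap K M a b = ⁅a, b⁆ := rfl

end AuxLemmas

theorem tensor_iso_of_perfect (K : Type u) [CommRing K]
    (M : Type u) [LieRing M] [LieAlgebra K M]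
    (hperf : LieSubalgebra.lieSpan K M {x : M | ∃ a b : M, x = ⁅a, b⁆} = ⊤)
    (T2 : Type u) [LieRing T2] [LieAlgebra K T2] (t2 : M →ₗ[K] M →ₗ[K] T2)
    (hT2 : IsNATensorSq K M T2 t2)
    (actM : M →ₗ[K] T2 →ₗ[K] T2)
    (hactM : ∀ m a b : M, actM m (t2 a b) = t2 m ⁅a, b⁆)
    (star : T2 →ₗ[K] M →ₗ[K] M)
    (hstar : ∀ a b m : M, star (t2 a b) m = ⁅⁅a, b⁆, m⁆)
    (T3 : Type u) [LieRing T3] [LieAlgebra K T3] (t3 : M →ₗ[K] T2 →ₗ[K] T3)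
    (hT3 : IsNATensor K M T2 actM star T3 t3) :
    ∃ e : T3 ≃ₗ⁅K⁆ T2,
      (∀ m a b : M, e (t3 m (t2 a b)) = t2 m ⁅a, b⁆) ∧
      ∀ m a b : M, e.symm (t2 m ⁅a, b⁆) = t3 m (t2 a b) := by
  classical
  have hT2' : IsNATensor K M M (bracketMap K M) (bracketMap K M) T2 t2 := hT2
  obtain ⟨rel3a2, rel3b2, rel42, lift2⟩ := hT2'
  obtain ⟨rel3a3, rel3b3, rel43, lift3⟩ := hT3
  have r3a : ∀ a a' b : M, t2 ⁅a,a'⁆ b = t2 a ⁅a',b⁆ - t2 a' ⁅a,b⁆ := rel3a2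
  have r3b : ∀ a b b' : M, t2 a ⁅b,b'⁆ = t2 ⁅b',a⁆ b - t2 ⁅b,a⁆ b' := rel3b2
  have r4 : ∀ a b a' b' : M, ⁅t2 a b, t2 a' b'⁆ = - t2 ⁅b,a⁆ ⁅a',b'⁆ := rel42
  -- M is spanned linearly by brackets
  have hMspan : ∀ m : M, m ∈ Submodule.span K {x : M | ∃ a b : M, x = ⁅a, b⁆} := by
    intro m
    have hle : LieSubalgebra.lieSpan K M {x : M | ∃ a b : M, x = ⁅a, b⁆} ≤
        (⟨Submodule.span K {x : M | ∃ a b : M, x = ⁅a, b⁆},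
          fun {x y} _ _ => Submodule.subset_span ⟨x, y, rfl⟩⟩ : LieSubalgebra K M) := by
      rw [LieSubalgebra.lieSpan_le]
      exact Submodule.subset_span
    exact hle (by rw [hperf]; exact LieSubalgebra.mem_top m)
  -- the canonical map δ : T2 → M
  obtain ⟨δ, hδ, -⟩ := lift2 M (bracketMap K M)
    (fun a a' b => by simp only [bracketMap_apply]; exact lie_lie a a' b)
    (fun a b b' => by
      simp only [bracketMap_apply]
      have h1 : ⁅b,⁅a,b'⁆⁆ = ⁅⁅b',a⁆,b⁆ := by
        rw [← lie_skew b ⁅a,b'⁆, ← lie_skew a b', neg_lie, neg_neg]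
      have h2 : ⁅⁅b,a⁆,b'⁆ = -⁅⁅a,b⁆,b'⁆ := by rw [← lie_skew a b, neg_lie, neg_neg]
      rw [leibniz_lie a b b', h1, h2]; abel)
    (fun a b a' b' => by
      simp only [bracketMap_apply]
      rw [← lie_skew a b, neg_lie])
  have hδ' : ∀ a b : M, δ (t2 a b) = ⁅a, b⁆ := hδ
  -- T2 is spanned linearly by the elementary tensors
  have hclosed : ∀ x ∈ {y : T2 | ∃ a b : M, y = t2 a b}, ∀ y ∈ {y : T2 | ∃ a b : M, y = t2 a b},
      ⁅x, y⁆ ∈ Submodule.span K {y : T2 | ∃ a b : M, y = t2 a b} := by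
    rintro x ⟨a, b, rfl⟩ y ⟨a', b', rfl⟩
    rw [r4]
    exact Submodule.neg_mem _ (Submodule.subset_span ⟨_, _, rfl⟩)
  have hspanT2 : ∀ x : T2, x ∈ Submodule.span K {y : T2 | ∃ a b : M, y = t2 a b} := by
    set S2 : LieSubalgebra K T2 :=
      ⟨Submodule.span K {y : T2 | ∃ a b : M, y = t2 a b},
        fun {x y} hx hy => span_lie_mem' hclosed x hx y hy⟩ with hS2def
    have hmem : ∀ a b : M, t2 a b ∈ S2 := fun a b => Submodule.subset_span ⟨a, b, rfl⟩
    let t2' : M →ₗ[K] M →ₗ[K] S2 := LinearMap.mk₂ K (fun a b => ⟨t2 a b, hmem a b⟩)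
      (fun a a' b => Subtype.ext (show t2 (a + a') b = t2 a b + t2 a' b by
        rw [map_add, LinearMap.add_apply]))
      (fun c a b => Subtype.ext (show t2 (c • a) b = c • t2 a b by
        rw [map_smul, LinearMap.smul_apply]))
      (fun a b b' => Subtype.ext (show t2 a (b + b') = t2 a b + t2 a b' by rw [map_add]))
      (fun c a b => Subtype.ext (show t2 a (c • b) = c • t2 a b by rw [map_smul]))
    have ht2' : ∀ a b : M, ((t2' a b : S2) : T2) = t2 a b := fun a b => rfl
    obtain ⟨φ₀, hφ₀, -⟩ := lift2 S2 t2'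
      (fun a a' b => Subtype.ext (r3a a a' b))
      (fun a b b' => Subtype.ext (r3b a b b'))
      (fun a b a' b' => Subtype.ext (r4 a b a' b'))
    obtain ⟨χ2, hχ2, uniq2⟩ := lift2 T2 t2 rel3a2 rel3b2 rel42
    have e1 := uniq2 (S2.incl.comp φ₀) (fun a b => by
      rw [LieHom.comp_apply, hφ₀ a b]; exact ht2' a b)
    have e2 := uniq2 (LieHom.id) (fun a b => rfl)
    have hid : S2.incl.comp φ₀ = LieHom.id := e1.trans e2.symm
    intro x
    have hx2 := (φ₀ x).2
    have : ((φ₀ x : S2) : T2) = x := by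
      have := congrArg (fun (f : T2 →ₗ⁅K⁆ T2) => f x) hid
      simpa using this
    rwa [this] at hx2
  -- actM and star in terms of δ
  have key0 : ∀ (d : M) (x : T2), actM d x = t2 d (δ x) := by
    intro d x
    induction hspanT2 x using Submodule.span_induction with
    | mem y hy => obtain ⟨a, b, rfl⟩ := hy; rw [hactM, hδ']
    | zero => simp
    | add y z _ _ iy iz => simp only [map_add, δ.map_add, iy, iz]
    | smul c y _ iy => simp only [map_smul, δ.map_smul, iy]
  have hstar' : ∀ (x : T2) (m : M), star x m = ⁅δ x, m⁆ := by
    intro x m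
    induction hspanT2 x using Submodule.span_induction with
    | mem y hy => obtain ⟨a, b, rfl⟩ := hy; rw [hstar, hδ']
    | zero => simp
    | add y z _ _ iy iz => simp only [map_add, δ.map_add, LinearMap.add_apply, iy, iz, add_lie]
    | smul c y _ iy => simp only [map_smul, δ.map_smul, LinearMap.smul_apply, iy, smul_lie]
  -- key vanishing lemma
  have key : ∀ (m : M) (x : T2), δ x = 0 → t3 m x = 0 := by
    intro m x hx
    induction hMspan m using Submodule.span_induction with
    | mem y hy =>
      obtain ⟨c, d, rfl⟩ := hy
      rw [rel3a3 c d x, key0, key0, hx]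
      simp
    | zero => simp
    | add y z _ _ iy iz => simp only [map_add, LinearMap.add_apply, iy, iz, add_zero]
    | smul c y _ iy => simp only [map_smul, LinearMap.smul_apply, iy, smul_zero]
  have keyeq : ∀ (m : M) (x y : T2), δ x = δ y → t3 m x = t3 m y := by
    intro m x y h
    have := key m (x - y) (by rw [map_sub δ, h, sub_self])
    rwa [map_sub, sub_eq_zero] at this
  -- δ is surjective
  have δsurj : Function.Surjective δ := by
    intro n
    have hle : LieSubalgebra.lieSpan K M {x : M | ∃ a b : M, x = ⁅a, b⁆} ≤ δ.range := by
      rw [LieSubalgebra.lieSpan_le]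
      rintro x ⟨a, b, rfl⟩
      exact (LieHom.mem_range δ ⁅a, b⁆).mpr ⟨t2 a b, hδ' a b⟩
    exact (LieHom.mem_range δ n).mp (hle (by rw [hperf]; exact LieSubalgebra.mem_top n))
  set s : M → T2 := Function.surjInv δsurj with hsdef
  have hs : ∀ n, δ (s n) = n := fun n => Function.surjInv_eq δsurj n
  -- the bilinear map g and the inverse morphism ψ
  let g : M →ₗ[K] M →ₗ[K] T3 := LinearMap.mk₂ K (fun m n => t3 m (s n))
    (fun m m' n => by show t3 (m + m') (s n) = _; rw [map_add, LinearMap.add_apply])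
    (fun c m n => by show t3 (c • m) (s n) = _; rw [map_smul, LinearMap.smul_apply])
    (fun m n n' => by
      show t3 m (s (n + n')) = t3 m (s n) + t3 m (s n')
      rw [keyeq m (s (n + n')) (s n + s n') (by rw [map_add δ, hs, hs, hs]), map_add])
    (fun c m n => by
      show t3 m (s (c • n)) = c • t3 m (s n)
      rw [keyeq m (s (c • n)) (c • s n) (by rw [map_smul δ, hs, hs]), map_smul])
  have hg : ∀ m n, g m n = t3 m (s n) := fun m n => rfl
  obtain ⟨ψ, hψ, -⟩ := lift2 T3 g
    (fun m m' n => by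
      simp only [bracketMap_apply, hg]
      rw [rel3a3 m m' (s n),
        keyeq m (actM m' (s n)) (s ⁅m', n⁆) (by rw [key0, hs, hδ', hs]),
        keyeq m' (actM m (s n)) (s ⁅m, n⁆) (by rw [key0, hs, hδ', hs])])
    (fun m n n' => by
      simp only [bracketMap_apply, hg]
      rw [keyeq m (s ⁅n, n'⁆) ⁅s n, s n'⁆ (by rw [hs, δ.map_lie, hs, hs]),
        rel3b3 m (s n) (s n'), hstar', hstar', hs, hs])
    (fun m n m' n' => by
      simp only [bracketMap_apply, hg]
      rw [rel43 m (s n) m' (s n'), hstar', hs,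
        keyeq ⁅n, m⁆ (actM m' (s n')) (s ⁅m', n'⁆) (by rw [key0, hs, hδ', hs])])
  have hψ' : ∀ m n, ψ (t2 m n) = t3 m (s n) := hψ
  -- the forward morphism φ
  obtain ⟨φ, hφ, -⟩ := lift3 T2 actM
    (fun m m' x => by
      simp only [key0, hδ']
      exact r3a m m' (δ x))
    (fun m x x' => by
      simp only [key0, hstar', δ.map_lie]
      exact r3b m (δ x) (δ x'))
    (fun m x m' x' => by
      simp only [key0, hstar', hδ']
      exact r4 m (δ x) m' (δ x'))
  -- the two composites are the identity
  obtain ⟨χ3, hχ3, uniq3⟩ := lift3 T3 t3 rel3a3 rel3b3 rel43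
  have hψφ : ∀ y : T3, ψ (φ y) = y := by
    have h1 : ∀ m x, (ψ.comp φ) (t3 m x) = t3 m x := by
      intro m x
      rw [LieHom.comp_apply, hφ, key0, hψ', keyeq m (s (δ x)) x (hs (δ x))]
    have hid : ψ.comp φ = LieHom.id := (uniq3 _ h1).trans (uniq3 LieHom.id (fun m x => rfl)).symm
    intro y
    have := congrArg (fun (f : T3 →ₗ⁅K⁆ T3) => f y) hid
    simpa using this
  obtain ⟨χ2, hχ2, uniq2⟩ := lift2 T2 t2 rel3a2 rel3b2 rel42
  have hφψ : ∀ x : T2, φ (ψ x) = x := by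
    have h1 : ∀ m n, (φ.comp ψ) (t2 m n) = t2 m n := by
      intro m n
      rw [LieHom.comp_apply, hψ', hφ, key0, hs]
    have hid : φ.comp ψ = LieHom.id := (uniq2 _ h1).trans (uniq2 LieHom.id (fun m n => rfl)).symm
    intro x
    have := congrArg (fun (f : T2 →ₗ⁅K⁆ T2) => f x) hid
    simpa using this
  refine ⟨LieEquiv.mk φ ψ hψφ hφψ, fun m a b => ?_, fun m a b => ?_⟩
  · show φ (t3 m (t2 a b)) = t2 m ⁅a, b⁆
    rw [hφ, hactM]
  · show ψ (t2 m ⁅a, b⁆) = t3 m (t2 a b)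
    rw [hψ', keyeq m (s ⁅a, b⁆) (t2 a b) (by rw [hs, hδ'])]
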